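/- Let p be a prime and c_1, ..., c_n be distinct positive integers. Then the n×n matrix M whose (i,j)-entry is c_j^{p^{i-1}} has nonzero determinant; equivalently, its columns are Z-linearly independent. -/

import Mathlib

open Polynomial

/-- Membership bound for the support of a finset sum of monomial multiples. -/
lemma support_sum_C_mul_X_pow {ι : Type*} (s : Finset ι) (a : ι → ℝ) (k : ι → ℕ) :
    (∑ i ∈ s, C (a i) * X ^ (k i)).support ⊆ s.image k := by
  intro m hm
  rw [Polynomial.mem_support_iff, Polynomial.finset_sum_coeff] at hm
  obtain ⟨e, he, hne⟩ := Finset.exists_ne_zero_of_sum_ne_zero hm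
  rw [Polynomial.coeff_C_mul, Polynomial.coeff_X_pow] at hne
  by_cases h : m = k e
  · exact Finset.mem_image.mpr ⟨e, he, h.symm⟩
  · simp [h] at hne

/-- Rolle's theorem applied along a sorted list of roots of a polynomial. -/
lemma rolle_list (Q : ℝ[X]) : ∀ (L : List ℝ) (lb : ℝ), L.Pairwise (· < ·) →
    (∀ x ∈ L, lb < x) → (∀ x ∈ L, Q.eval x = 0) →
    ∃ L' : List ℝ, L'.Pairwise (· < ·) ∧ L.length ≤ L'.length + 1 ∧
      L'.length + 1 ≤ max L.length 1 ∧
      (∀ x ∈ L', lb < x) ∧ (∀ x ∈ L', Q.derivative.eval x = 0) := by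
  intro L
  induction L with
  | nil => intro lb _ _ _; exact ⟨[], by simp, by simp, by simp, by simp, by simp⟩
  | cons a t ih =>
    intro lb hsort hlb hroot
    match t, hsort, hlb, hroot with
    | [], _, _, _ => exact ⟨[], by simp, by simp, by simp, by simp, by simp⟩
    | b :: t, hsort, hlb, hroot =>
      have hab : a < b := (List.pairwise_cons.mp hsort).1 b (by simp)
      have hcont : ContinuousOn (fun x => Q.eval x) (Set.Icc a b) :=
        (Polynomial.continuous Q).continuousOn
      have hfa : Q.eval a = 0 := hroot a (by simp)
      have hfb : Q.eval b = 0 := hroot b (by simp)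
      obtain ⟨x₀, hx₀, hdx₀⟩ := exists_deriv_eq_zero hab hcont (by rw [hfa, hfb])
      have hder : Q.derivative.eval x₀ = 0 := by
        rw [← Polynomial.deriv]; exact hdx₀
      have harg1 : ∀ x ∈ b :: t, x₀ < x := by
        intro x hx
        rw [List.mem_cons] at hx
        rcases hx with rfl | hx
        · exact hx₀.2
        · exact lt_trans hx₀.2 ((List.pairwise_cons.mp (List.pairwise_cons.mp hsort).2).1 x hx)
      have harg2 : ∀ x ∈ b :: t, Q.eval x = 0 := fun x hx => hroot x (by simp [hx])
      obtain ⟨L'', hs'', hl1'', hl2'', hlb'', hr''⟩ :=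
        ih x₀ (List.pairwise_cons.mp hsort).2 harg1 harg2
      refine ⟨x₀ :: L'', List.pairwise_cons.mpr ⟨hlb'', hs''⟩, ?_, ?_, ?_, ?_⟩
      · simpa using Nat.add_le_add_right hl1'' 1
      · simp only [List.length_cons] at hl2'' ⊢
        omega
      · intro x hx
        rw [List.mem_cons] at hx
        rcases hx with rfl | hx
        · exact lt_trans (hlb a (by simp)) hx₀.1
        · exact lt_trans (lt_trans (hlb a (by simp)) hx₀.1) (hlb'' x hx)
      · intro x hx
        rw [List.mem_cons] at hx
        rcases hx with rfl | hx
        · exact hder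
        · exact hr'' x hx

/-- Q.derivative has at least one fewer term, when Q has nonzero constant term. -/
lemma deriv_support_card (Q : ℝ[X]) (h0 : Q.coeff 0 ≠ 0) :
    Q.derivative.support.card + 1 ≤ Q.support.card := by
  have hsub : Q.derivative.support ⊆ (Q.support.erase 0).image (· - 1) := by
    intro m hm
    rw [Polynomial.mem_support_iff, Polynomial.coeff_derivative] at hm
    have : Q.coeff (m + 1) ≠ 0 := fun h => hm (by simp [h])
    refine Finset.mem_image.mpr ⟨m + 1, ?_, by simp⟩
    exact Finset.mem_erase.mpr ⟨by omega, Polynomial.mem_support_iff.mpr this⟩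
  have h0mem : 0 ∈ Q.support := Polynomial.mem_support_iff.mpr h0
  have hcardpos : 1 ≤ Q.support.card := Finset.card_pos.mpr ⟨0, h0mem⟩
  have h1 : Q.derivative.support.card ≤ ((Q.support.erase 0).image (· - 1)).card :=
    Finset.card_le_card hsub
  have h2 : ((Q.support.erase 0).image (· - 1)).card ≤ (Q.support.erase 0).card :=
    Finset.card_image_le
  have h3 : (Q.support.erase 0).card = Q.support.card - 1 :=
    Finset.card_erase_of_mem h0mem
  omega

/-- Descartes-type bound: a nonzero real polynomial with k terms has
fewer than k distinct positive roots. -/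
lemma descartes : ∀ (N : ℕ) (P : ℝ[X]) (L : List ℝ), L.length ≤ N → P ≠ 0 →
    L.Pairwise (· < ·) → (∀ x ∈ L, 0 < x) → (∀ x ∈ L, P.eval x = 0) →
    L.length < P.support.card := by
  intro N
  induction N with
  | zero =>
    intro P L hlen hP _ _ _
    have : L.length = 0 := Nat.le_zero.mp hlen
    rw [this]
    exact Finset.card_pos.mpr (Polynomial.support_nonempty.mpr hP)
  | succ N ih =>
    intro P L hlen hP hsort hposL hrootL
    by_cases hLne : L = []
    · rw [hLne]
      exact Finset.card_pos.mpr (Polynomial.support_nonempty.mpr hP)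
    set e₀ := P.natTrailingDegree with he₀
    set Q : ℝ[X] := ∑ e ∈ P.support, C (P.coeff e) * X ^ (e - e₀) with hQ
    -- evaluation identity
    have heval : ∀ x : ℝ, x ≠ 0 → P.eval x = x ^ e₀ * Q.eval x := by
      intro x hx
      conv_lhs => rw [P.as_sum_support]
      rw [hQ, Polynomial.eval_finset_sum, Polynomial.eval_finset_sum, Finset.mul_sum]
      refine Finset.sum_congr rfl fun e he => ?_
      have hle : e₀ ≤ e := Polynomial.natTrailingDegree_le_of_mem_supp e he
      have hxe : x ^ e = x ^ e₀ * x ^ (e - e₀) := by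
        rw [← pow_add, Nat.add_sub_cancel' hle]
      simp only [Polynomial.eval_monomial, Polynomial.eval_mul, Polynomial.eval_C,
        Polynomial.eval_pow, Polynomial.eval_X, hxe]
      ring
    -- constant coefficient of Q
    have hQ0 : Q.coeff 0 = P.coeff e₀ := by
      rw [hQ, Polynomial.finset_sum_coeff]
      have he₀mem : e₀ ∈ P.support := by
        rw [he₀]
        exact Polynomial.natTrailingDegree_mem_support_of_nonzero hP
      rw [Finset.sum_eq_single e₀]
      · simp
      · intro e he hne
        have hle : e₀ ≤ e := Polynomial.natTrailingDegree_le_of_mem_supp e he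
        have : e - e₀ ≠ 0 := by omega
        simp [Polynomial.coeff_C_mul, Polynomial.coeff_X_pow, Ne.symm this]
      · intro h; exact absurd he₀mem h
    have hQ0ne : Q.coeff 0 ≠ 0 := by
      rw [hQ0]
      exact Polynomial.trailingCoeff_nonzero_iff_nonzero.mpr hP
    -- support bound
    have hQsupp : Q.support.card ≤ P.support.card := by
      calc Q.support.card ≤ (P.support.image (· - e₀)).card :=
            Finset.card_le_card (support_sum_C_mul_X_pow _ _ _)
        _ ≤ P.support.card := Finset.card_image_le
    -- roots of Q
    have hrootQ : ∀ x ∈ L, Q.eval x = 0 := by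
      intro x hx
      have hxpos := hposL x hx
      have h := heval x (ne_of_gt hxpos)
      rw [hrootL x hx] at h
      have hxe : (x : ℝ) ^ e₀ ≠ 0 := pow_ne_zero _ (ne_of_gt hxpos)
      exact (mul_eq_zero.mp h.symm).resolve_left hxe
    by_cases hQ' : Q.derivative = 0
    · -- Q is a nonzero constant, contradiction with existence of root
      have hQc : Q = C (Q.coeff 0) := Polynomial.eq_C_of_derivative_eq_zero hQ'
      obtain ⟨a, t, rfl⟩ := List.exists_cons_of_ne_nil hLne
      have h := hrootQ a (by simp)
      rw [hQc] at h
      simp at h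
      exact absurd h hQ0ne
    · obtain ⟨L', hs', hl1', hl2', hlb', hr'⟩ := rolle_list Q L 0 hsort hposL hrootQ
      have hmax : max L.length 1 = L.length := by
        have : 1 ≤ L.length := List.length_pos_iff.mpr hLne
        omega
      rw [hmax] at hl2'
      have hL'len : L'.length ≤ N := by omega
      have hIH := ih Q.derivative L' hL'len hQ' hs' hlb' hr'
      have hd := deriv_support_card Q hQ0ne
      omega

theorem stmt_0 (p : ℕ) (hp : p.Prime) (n : ℕ) (c : Fin n → ℤ)
    (hpos : ∀ i, 0 < c i) (hdist : Function.Injective c) :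
    (Matrix.of (fun i j : Fin n => c j ^ p ^ (i : ℕ))).det ≠ 0 := by
  intro hdet
  -- move to ℝ
  set M : Matrix (Fin n) (Fin n) ℝ :=
    Matrix.of (fun i j : Fin n => (c j : ℝ) ^ p ^ (i : ℕ)) with hM
  have hdetR : M.det = 0 := by
    have h2 : M = (Int.castRingHom ℝ).mapMatrix
        (Matrix.of (fun i j : Fin n => c j ^ p ^ (i : ℕ))) := by
      ext i j
      simp [hM]
    rw [h2, ← RingHom.map_det, hdet, map_zero]
  have hdetT : M.transpose.det = 0 := by rw [Matrix.det_transpose]; exact hdetR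
  obtain ⟨v, hvne, hv⟩ := (Matrix.exists_mulVec_eq_zero_iff).mpr hdetT
  -- the polynomial
  set P : ℝ[X] := ∑ i : Fin n, Polynomial.C (v i) * Polynomial.X ^ (p ^ (i : ℕ)) with hP
  have hpinj : Function.Injective (fun i : Fin n => p ^ (i : ℕ)) := by
    intro i j hij
    exact Fin.ext (Nat.pow_right_injective hp.two_le hij)
  have hcoeff : ∀ i : Fin n, P.coeff (p ^ (i : ℕ)) = v i := by
    intro i
    rw [hP, Polynomial.finset_sum_coeff, Finset.sum_eq_single i]
    · simp
    · intro j _ hne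
      have : p ^ (i : ℕ) ≠ p ^ (j : ℕ) := fun h => hne (hpinj h).symm
      simp [Polynomial.coeff_C_mul, Polynomial.coeff_X_pow, this]
    · simp
  have hPne : P ≠ 0 := by
    obtain ⟨i, hi⟩ := Function.ne_iff.mp hvne
    intro h
    apply hi
    have := hcoeff i
    rw [h] at this
    simpa using this.symm
  have hPsupp : P.support.card ≤ n := by
    calc P.support.card ≤ (Finset.univ.image (fun i : Fin n => p ^ (i : ℕ))).card := by
          rw [hP]
          exact Finset.card_le_card (support_sum_C_mul_X_pow _ _ _)
      _ ≤ (Finset.univ : Finset (Fin n)).card := Finset.card_image_le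
      _ = n := by simp
  -- roots
  have hroot : ∀ j : Fin n, P.eval ((c j : ℝ)) = 0 := by
    intro j
    have hvj : ∑ i : Fin n, M.transpose j i * v i = 0 := by
      simpa [Matrix.mulVec, dotProduct] using congrFun hv j
    rw [hP, Polynomial.eval_finset_sum]
    simp only [Polynomial.eval_mul, Polynomial.eval_C, Polynomial.eval_pow, Polynomial.eval_X]
    rw [← hvj]
    refine Finset.sum_congr rfl fun i _ => ?_
    simp [hM, Matrix.transpose_apply, mul_comm]
  -- sorted list of roots
  set S : Finset ℝ := Finset.univ.image (fun j : Fin n => (c j : ℝ)) with hS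
  have hinj : Function.Injective (fun j : Fin n => (c j : ℝ)) :=
    fun a b h => hdist (Int.cast_injective h)
  have hScard : S.card = n := by
    rw [hS, Finset.card_image_of_injective _ hinj]; simp
  set L : List ℝ := S.sort (· ≤ ·) with hL
  have hLlen : L.length = n := by rw [hL, Finset.length_sort, hScard]
  have hLsort : L.Pairwise (· < ·) := (Finset.sortedLT_sort S).pairwise
  have hmem : ∀ x ∈ L, ∃ j : Fin n, x = (c j : ℝ) := by
    intro x hx
    rw [hL, Finset.mem_sort] at hx
    obtain ⟨j, _, hj⟩ := Finset.mem_image.mp hx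
    exact ⟨j, hj.symm⟩
  have hposL : ∀ x ∈ L, 0 < x := by
    intro x hx
    obtain ⟨j, rfl⟩ := hmem x hx
    exact_mod_cast hpos j
  have hrootL : ∀ x ∈ L, P.eval x = 0 := by
    intro x hx
    obtain ⟨j, rfl⟩ := hmem x hx
    exact hroot j
  have := descartes L.length P L le_rfl hPne hLsort hposL hrootL
  omega
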